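/- Let X be a Banach space and (x_i)_{i=1}^m a normalized K-basic sequence in X. Then (x_i)_{i=1}^m is an ℓ₁⁺-K-sequence (i.e. (1/K)∑aᵢ ≤ ‖∑aᵢxᵢ‖ for all nonnegative scalars aᵢ) if and only if there exists f in the unit sphere of X* with f(xᵢ) ≥ 1/K for each i. -/

import Mathlib

variable {X : Type*} [NormedAddCommGroup X] [NormedSpace ℝ X]

/-- Partial sum `∑_{i < p} aᵢ xᵢ` of a finite sequence. -/
def prefSum {m : ℕ} (x : Fin m → X) (a : Fin m → ℝ) (p : ℕ) : X :=
  ∑ i : Fin m, if (i : ℕ) < p then a i • x i else 0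

/-- `(x_i)_{i=1}^m` is `K`-basic: the basis constant is at most `K`. -/
def IsFinBasic {m : ℕ} (K : ℝ) (x : Fin m → X) : Prop :=
  ∀ (a : Fin m → ℝ) (p q : ℕ), p ≤ q → q ≤ m →
    ‖prefSum x a p‖ ≤ K * ‖prefSum x a q‖

/-- `(x_i)_{i=1}^m` is normalized: each vector has norm one. -/
def IsNormalizedFin {m : ℕ} (x : Fin m → X) : Prop := ∀ i, ‖x i‖ = 1

/-- A normalized `K`-basic sequence is an `ℓ₁⁺-K`-sequence iff there is a norm one
functional `f` with `f(xᵢ) ≥ 1/K` for each `i`. -/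
theorem l1Plus_iff_exists_functional [CompleteSpace X]
    {m : ℕ} (hm : 1 ≤ m) (K : ℝ) (hK : 1 ≤ K) (x : Fin m → X)
    (hnorm : IsNormalizedFin x) (hbasic : IsFinBasic K x) :
    (∀ a : Fin m → ℝ, (∀ i, 0 ≤ a i) →
        (1 / K) * ∑ i, a i ≤ ‖∑ i, a i • x i‖) ↔
      ∃ f : StrongDual ℝ X, ‖f‖ = 1 ∧ ∀ i, 1 / K ≤ f (x i) := by
  have hK0 : (0:ℝ) < K := lt_of_lt_of_le one_pos hK
  constructor
  · intro h
    -- Separate the open ball of radius 1/K from the convex hull of the xᵢ.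
    have hdisj : Disjoint (Metric.ball (0:X) (1/K)) (convexHull ℝ (Set.range x)) := by
      rw [Set.disjoint_left]
      intro y hyS hyT
      rw [convexHull_range_eq_exists_affineCombination] at hyT
      obtain ⟨s, w, hw0, hw1, hwy⟩ := hyT
      set a : Fin m → ℝ := fun i => if i ∈ s then w i else 0 with ha_def
      have ha0 : ∀ i, 0 ≤ a i := by
        intro i
        simp only [ha_def]
        split
        · exact hw0 _ ‹_›
        · exact le_rfl
      have hsum : ∑ i, a i = 1 := by
        rw [ha_def, ← hw1]
        simp [Finset.sum_ite_mem]
      have hy : ∑ i, a i • x i = y := by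
        rw [← hwy, Finset.affineCombination_eq_linear_combination s x w hw1, ha_def]
        simp only [ite_smul, zero_smul]
        rw [Finset.sum_ite_mem]
        simp
      have h1 := h a ha0
      rw [hsum, hy, mul_one] at h1
      rw [Metric.mem_ball, dist_zero_right] at hyS
      linarith
    obtain ⟨f, u, hfu, hft⟩ := geometric_hahn_banach_open (convex_ball _ _)
      Metric.isOpen_ball (convex_convexHull ℝ _) hdisj
    have hu0 : 0 < u := by
      have := hfu 0 (Metric.mem_ball_self (by positivity))
      simpa using this
    have hfx : ∀ i, u ≤ f (x i) := fun i =>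
      hft _ (subset_convexHull ℝ _ ⟨i, rfl⟩)
    have hbound : ∀ z : X, f z ≤ K * u * ‖z‖ := by
      intro z
      by_contra hcon
      push_neg at hcon
      have hz0 : z ≠ 0 := by
        rintro rfl
        simp only [map_zero, norm_zero, mul_zero] at hcon
        exact absurd hcon (lt_irrefl 0)
      have hnz : 0 < ‖z‖ := norm_pos_iff.mpr hz0
      have hfz : 0 < f z := lt_trans (by positivity) hcon
      set r : ℝ := (K * u * ‖z‖) / (f z) with hr_def
      have hr1 : r < 1 := (div_lt_one hfz).mpr hcon
      have hr0 : 0 < r := by positivity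
      have hw : (r / (K * ‖z‖)) • z ∈ Metric.ball (0:X) (1/K) := by
        rw [Metric.mem_ball, dist_zero_right, norm_smul, Real.norm_eq_abs,
          abs_of_pos (by positivity)]
        rw [div_mul_eq_mul_div, mul_comm K ‖z‖, ← div_div, mul_div_assoc,
          div_self (ne_of_gt hnz), mul_one]
        rw [div_lt_div_iff₀ hK0 hK0]
        nlinarith
      have heq : f ((r / (K * ‖z‖)) • z) = u := by
        rw [map_smul, smul_eq_mul, hr_def]
        field_simp
      have := hfu _ hw
      rw [heq] at this
      exact absurd this (lt_irrefl u)
    have hnf : ‖f‖ ≤ K * u := by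
      apply ContinuousLinearMap.opNorm_le_bound _ (by positivity)
      intro z
      rw [Real.norm_eq_abs, abs_le]
      constructor
      · have := hbound (-z)
        rw [map_neg, norm_neg] at this
        linarith
      · exact hbound z
    have hf0 : f ≠ 0 := by
      intro hfz
      have := hfx ⟨0, hm⟩
      rw [hfz] at this
      simp at this
      linarith
    have hfpos : 0 < ‖f‖ := norm_pos_iff.mpr hf0
    refine ⟨‖f‖⁻¹ • f, ?_, ?_⟩
    · rw [norm_smul, Real.norm_eq_abs, abs_of_pos (by positivity)]
      field_simp
    · intro i
      have h1 : (‖f‖⁻¹ • f) (x i) = ‖f‖⁻¹ * f (x i) := rfl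
      have h2 : (1:ℝ)/K = u / (K * u) := by field_simp
      rw [h1, h2, inv_mul_eq_div]
      gcongr
      · exact le_trans hu0.le (hfx i)
      · exact hfx i
  · rintro ⟨f, hf1, hfi⟩ a ha
    calc (1/K) * ∑ i, a i = ∑ i, a i * (1/K) := by rw [Finset.mul_sum]; simp [mul_comm]
      _ ≤ ∑ i, a i * f (x i) := by
          apply Finset.sum_le_sum
          intro i _
          exact mul_le_mul_of_nonneg_left (hfi i) (ha i)
      _ = f (∑ i, a i • x i) := by
          rw [map_sum]
          congr 1; ext i
          rw [map_smul, smul_eq_mul]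
      _ ≤ ‖∑ i, a i • x i‖ := by
          calc f (∑ i, a i • x i) ≤ |f (∑ i, a i • x i)| := le_abs_self _
            _ ≤ ‖f‖ * ‖∑ i, a i • x i‖ := f.le_opNorm _
            _ = ‖∑ i, a i • x i‖ := by rw [hf1, one_mul]
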